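/- Let Λ ⊆ ℝ^m be an uncountable set such that any n+1 pairwise distinct points of Λ are linearly independent (so m > n). Suppose K is a topological space satisfying the countable chain condition and {U_ᾱ : ᾱ ∈ Λ} is a family of non-empty open subsets of K such that for any n+1 pairwise distinct ᾱ₁, …, ᾱ_{n+1} ∈ Λ the intersection U_{ᾱ₁} ∩ ⋯ ∩ U_{ᾱ_{n+1}} is empty. Then a contradiction follows; i.e., no such family can exist. -/
import Mathlib


/-- Disjointness in a vector lattice. -/
def disjt {X : Type*} [Lattice X] [AddCommGroup X] (x y : X) : Prop := |x| ⊓ |y| = 0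

/-- Disjoint complement of a set. -/
def dComp {X : Type*} [Lattice X] [AddCommGroup X] (S : Set X) : Set X :=
  {x | ∀ y ∈ S, disjt x y}

/-- A band (in an Archimedean vector lattice) is a disjoint complement. -/
def IsBand {X : Type*} [Lattice X] [AddCommGroup X] (B : Set X) : Prop :=
  ∃ S : Set X, B = dComp S

/-- A projection band. -/
def IsProjBand {X : Type*} [Lattice X] [AddCommGroup X] (B : Set X) : Prop :=
  IsBand B ∧ ∀ x : X, ∃ b ∈ B, ∃ c ∈ dComp B, x = b + c

/-- `P` is the band-projection onto the projection band `B`. -/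
def IsBandProjOnto {X : Type*} [Lattice X] [AddCommGroup X] [Module ℝ X]
    (B : Set X) (P : X →ₗ[ℝ] X) : Prop :=
  IsProjBand B ∧ ∀ x : X, P x ∈ B ∧ x - P x ∈ dComp B

/-- `P` is a band-projection. -/
def IsBandProj {X : Type*} [Lattice X] [AddCommGroup X] [Module ℝ X]
    (P : X →ₗ[ℝ] X) : Prop := ∃ B : Set X, IsBandProjOnto B P

/-- A band preserving operator. -/
def BandPreserving {X : Type*} [Lattice X] [AddCommGroup X] [Module ℝ X]
    (T : X →ₗ[ℝ] X) : Prop := ∀ x y : X, disjt x y → disjt (T x) y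

/-- A cofinal family of projection bands. -/
def CofinalProjBands (X : Type*) [Lattice X] [AddCommGroup X] : Prop :=
  ∀ B : Set X, IsBand B → B ≠ {0} →
    ∃ B' : Set X, IsProjBand B' ∧ B' ≠ {0} ∧ B' ⊆ B

/-- d-independence of a family (band-free sense). -/
def dIndepFam {X : Type*} [Lattice X] [AddCommGroup X] [Module ℝ X]
    {ι : Type*} (f : ι → X) : Prop :=
  ∀ B : Set X, IsBand B → ∀ (t : Finset ι) (c : ι → ℝ),
    (∀ j ∈ t, c j ≠ 0) → (∑ j ∈ t, c j • f j) ∈ dComp B → ∀ j ∈ t, f j ∈ dComp B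

/-- d-independence of a set (band-free sense). -/
def dIndepSet {X : Type*} [Lattice X] [AddCommGroup X] [Module ℝ X]
    (s : Set X) : Prop := dIndepFam (fun x : s => (x : X))

/-- A full system of pairwise disjoint bands. -/
def FullDisjBands {X : Type*} [Lattice X] [AddCommGroup X] (𝒞 : Set (Set X)) : Prop :=
  (∀ B ∈ 𝒞, IsBand B) ∧
  (∀ B ∈ 𝒞, ∀ B' ∈ 𝒞, B ≠ B' → ∀ a ∈ B, ∀ b ∈ B', disjt a b) ∧
  (∀ z : X, (∀ B ∈ 𝒞, z ∈ dComp B) → z = 0)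

/-- A d-basis (band-free sense). -/
def IsDBasis {X : Type*} [Lattice X] [AddCommGroup X] [Module ℝ X]
    (s : Set X) : Prop :=
  dIndepSet s ∧ ∀ x : X, ∃ 𝒞 : Set (Set X), FullDisjBands 𝒞 ∧
    ∀ B ∈ 𝒞, ∃ (t : Finset X) (c : X → ℝ), (↑t ⊆ s) ∧ (∀ e ∈ t, c e ≠ 0) ∧
      (x - ∑ e ∈ t, c e • e) ∈ dComp B

/-- `b` is a semi-component of `x`. -/
def IsSemiComponent {X : Type*} [Lattice X] [AddCommGroup X] [Module ℝ X]
    (x b : X) : Prop :=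
  b ≠ 0 ∧ ∃ (𝒞 : Set (Set X)) (c : Set X → ℝ), FullDisjBands 𝒞 ∧
    ∀ B ∈ 𝒞, (b - c B • x) ∈ dComp B

/-- Condition (*): every band has a semi-component of every element not disjoint from it. -/
def CondStar (X : Type*) [Lattice X] [AddCommGroup X] [Module ℝ X] : Prop :=
  ∀ B : Set X, IsBand B → ∀ x : X, x ∉ dComp B → ∃ b ∈ B, IsSemiComponent x b
/-- Projection-band-sense d-independence of a family. -/
def dIndepProjFam {X : Type*} [Lattice X] [AddCommGroup X] [Module ℝ X]
    {ι : Type*} (f : ι → X) : Prop :=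
  ∀ (B : Set X) (P : X →ₗ[ℝ] X), IsBandProjOnto B P →
    ∀ (t : Finset ι) (c : ι → ℝ), (∑ j ∈ t, c j • P (f j)) = 0 →
      ∀ j ∈ t, P (f j) ≠ 0 → c j = 0

/-- Projection-band-sense d-independence of a set. -/
def dIndepProjSet {X : Type*} [Lattice X] [AddCommGroup X] [Module ℝ X]
    (s : Set X) : Prop := dIndepProjFam (fun x : s => (x : X))

/-- Lateral completeness. -/
def LatComplete (X : Type*) [Lattice X] [AddCommGroup X] : Prop :=
  ∀ S : Set X, (∀ x ∈ S, 0 ≤ x) → S.Pairwise disjt → ∃ b : X, IsLUB S b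

/-- Lateral completeness of a subset (sups taken relative to the subset). -/
def LatCompleteIn {X : Type*} [Lattice X] [AddCommGroup X] (X₀ : Set X) : Prop :=
  ∀ S : Set X, S ⊆ X₀ → (∀ x ∈ S, 0 ≤ x) → S.Pairwise disjt →
    ∃ b ∈ X₀, b ∈ upperBounds S ∧ ∀ b' ∈ X₀, b' ∈ upperBounds S → b ≤ b'

/-- Dedekind completeness of a subset (sups relative to the subset). -/
def DedekindCompleteIn {X : Type*} [Lattice X] [AddCommGroup X] (X₀ : Set X) : Prop :=
  ∀ S : Set X, S ⊆ X₀ → S.Nonempty → (∃ u ∈ X₀, u ∈ upperBounds S) →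
    ∃ b ∈ X₀, b ∈ upperBounds S ∧ ∀ b' ∈ X₀, b' ∈ upperBounds S → b ≤ b'

/-- Universal completeness of a subset. -/
def UnivCompleteIn {X : Type*} [Lattice X] [AddCommGroup X] (X₀ : Set X) : Prop :=
  LatCompleteIn X₀ ∧ DedekindCompleteIn X₀

/-- Disjoint complement of `S` relative to the sublattice `X₀`. -/
def dCompIn {X : Type*} [Lattice X] [AddCommGroup X] (X₀ S : Set X) : Set X :=
  {x | x ∈ X₀ ∧ ∀ y ∈ S, disjt x y}

/-- Bands of the sublattice `X₀`. -/
def IsBandIn {X : Type*} [Lattice X] [AddCommGroup X] (X₀ B : Set X) : Prop :=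
  ∃ S : Set X, S ⊆ X₀ ∧ B = dCompIn X₀ S

/-- Projection bands of the sublattice `X₀`. -/
def IsProjBandIn {X : Type*} [Lattice X] [AddCommGroup X] (X₀ B : Set X) : Prop :=
  IsBandIn X₀ B ∧ ∀ x ∈ X₀, ∃ b ∈ B, ∃ c ∈ dCompIn X₀ B, x = b + c

/-- A band `B` is principally universally complete if each of its principal bands
is universally complete. -/
def PrincUnivCompleteIn {X : Type*} [Lattice X] [AddCommGroup X] (B : Set X) : Prop :=
  ∀ u ∈ B, UnivCompleteIn (dCompIn B (dCompIn B {u}))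

/-- d-independence of a family relative to the sublattice `X₀`. -/
def dIndepFamIn {X : Type*} [Lattice X] [AddCommGroup X] [Module ℝ X]
    (X₀ : Set X) {ι : Type*} (f : ι → X) : Prop :=
  ∀ B : Set X, IsBandIn X₀ B → ∀ (t : Finset ι) (c : ι → ℝ),
    (∀ j ∈ t, c j ≠ 0) → (∑ j ∈ t, c j • f j) ∈ dCompIn X₀ B →
      ∀ j ∈ t, f j ∈ dCompIn X₀ B

/-- A full system of pairwise disjoint bands of the sublattice `X₀`. -/
def FullDisjBandsIn {X : Type*} [Lattice X] [AddCommGroup X]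
    (X₀ : Set X) (𝒞 : Set (Set X)) : Prop :=
  (∀ B ∈ 𝒞, IsBandIn X₀ B) ∧
  (∀ B ∈ 𝒞, ∀ B' ∈ 𝒞, B ≠ B' → ∀ a ∈ B, ∀ b ∈ B', disjt a b) ∧
  (∀ z ∈ X₀, (∀ B ∈ 𝒞, z ∈ dCompIn X₀ B) → z = 0)

/-- A d-basis of the sublattice `X₀`. -/
def IsDBasisIn {X : Type*} [Lattice X] [AddCommGroup X] [Module ℝ X]
    (X₀ : Set X) (s : Set X) : Prop :=
  dIndepFamIn X₀ (fun x : s => (x : X)) ∧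
  ∀ x ∈ X₀, ∃ 𝒞 : Set (Set X), FullDisjBandsIn X₀ 𝒞 ∧
    ∀ B ∈ 𝒞, ∃ (t : Finset X) (c : X → ℝ), (↑t ⊆ s) ∧ (∀ e ∈ t, c e ≠ 0) ∧
      (x - ∑ e ∈ t, c e • e) ∈ dCompIn X₀ B

/-- An essentially constant continuous function. -/
def EssConst {K : Type*} [TopologicalSpace K] (f : C(K, ℝ)) : Prop :=
  ∀ G : Set K, IsOpen G → G.Nonempty →
    ∃ G₁ ⊆ G, IsOpen G₁ ∧ G₁.Nonempty ∧ ∃ c : ℝ, ∀ t ∈ G₁, f t = c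


lemma ccc_aux {K : Type*} [TopologicalSpace K] {ι : Type*}
    (hccc : ∀ 𝒰 : Set (Set K), (∀ U ∈ 𝒰, IsOpen U ∧ U.Nonempty) →
      (𝒰.Pairwise Disjoint) → 𝒰.Countable) :
    ∀ (n : ℕ) (Λ : Set ι) (U : ι → Set K), ¬ Λ.Countable →
      (∀ a ∈ Λ, IsOpen (U a)) → (∀ a ∈ Λ, (U a).Nonempty) →
      (∀ f : Fin (n + 1) → ι, Function.Injective f → (∀ i, f i ∈ Λ) →
        (⋂ i, U (f i)) = ∅) → False := by
  intro n
  induction n with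
  | zero =>
    intro Λ U hunc _ hne hint
    obtain ⟨a, ha⟩ : Λ.Nonempty := by
      rcases Λ.eq_empty_or_nonempty with h | h
      · exact absurd (h ▸ Set.countable_empty) hunc
      · exact h
    have := hint (fun _ => a) (fun i j _ => Fin.ext (by have := i.isLt; have := j.isLt; omega)) (fun _ => ha)
    simp only [Set.iInter_const] at this
    exact (hne a ha).ne_empty this
  | succ n ih =>
    intro Λ U hunc hop hne hint
    by_cases h : ∃ a ∈ Λ, ¬ ({b ∈ Λ | b ≠ a ∧ (U a ∩ U b).Nonempty} : Set ι).Countable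
    · obtain ⟨a, haΛ, hS⟩ := h
      refine ih {b ∈ Λ | b ≠ a ∧ (U a ∩ U b).Nonempty} (fun b => U a ∩ U b) hS
        (fun b hb => (hop a haΛ).inter (hop b hb.1)) (fun b hb => hb.2.2) ?_
      intro f hf hfm
      have hg : Function.Injective (Fin.cons a f : Fin (n + 2) → ι) := by
        refine Fin.cons_injective_iff.mpr ⟨?_, hf⟩
        rintro ⟨i, rfl⟩
        exact (hfm i).2.1 rfl
      have hempty := hint (Fin.cons a f) hg (by
        intro i
        refine Fin.cases haΛ (fun j => (hfm j).1) i)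
      ext x
      simp only [Set.mem_iInter, Set.mem_inter_iff, Set.mem_empty_iff_false, iff_false,
        not_forall]
      by_contra hcon
      push_neg at hcon
      have hx : x ∈ ⋂ i : Fin (n + 2), U ((Fin.cons a f : Fin (n + 2) → ι) i) := by
        rw [Set.mem_iInter]
        intro i
        refine Fin.cases ?_ ?_ i
        · exact (hcon 0).1
        · exact fun j => (hcon j).2
      rw [hempty] at hx
      exact hx
    · push_neg at h
      set 𝒜 : Set (Set ι) := {M | M ⊆ Λ ∧ M.Pairwise fun a b => U a ∩ U b = ∅} with h𝒜
      obtain ⟨M, hM⟩ := zorn_subset 𝒜 (by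
        intro c hc hchain
        refine ⟨⋃₀ c, ⟨?_, ?_⟩, fun s hs => Set.subset_sUnion_of_mem hs⟩
        · exact Set.sUnion_subset fun s hs => (hc hs).1
        · intro x hx y hy hxy
          obtain ⟨s, hs, hxs⟩ := hx
          obtain ⟨t, ht, hyt⟩ := hy
          rcases hchain.total hs ht with hst | hts
          · exact (hc ht).2 (hst hxs) hyt hxy
          · exact (hc hs).2 hxs (hts hyt) hxy)
      have hMΛ : M ⊆ Λ := hM.prop.1
      have hMunc : ¬ M.Countable := by
        intro hMc
        have hT : (M ∪ ⋃ a ∈ M, {b ∈ Λ | b ≠ a ∧ (U a ∩ U b).Nonempty}).Countable :=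
          hMc.union (hMc.biUnion fun a ha => h a (hMΛ ha))
        obtain ⟨b, hbΛ, hbT⟩ := Set.not_subset.mp
          (fun hsub => hunc (hT.mono hsub))
        have hbM : b ∉ M := fun hbM => hbT (Or.inl hbM)
        have hdisj : ∀ a ∈ M, U a ∩ U b = ∅ := by
          intro a ha
          have : b ∉ {b ∈ Λ | b ≠ a ∧ (U a ∩ U b).Nonempty} := fun hmem =>
            hbT (Or.inr (Set.mem_biUnion ha hmem))
          simp only [Set.mem_setOf_eq, not_and] at this
          exact Set.not_nonempty_iff_eq_empty.mp
            (this hbΛ (fun e => hbM (e ▸ ha)))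
        have hmem : M ∪ {b} ∈ 𝒜 := by
          constructor
          · exact Set.union_subset hMΛ (by simpa using hbΛ)
          · intro x hx y hy hxy
            rcases hx with hx | hx <;> rcases hy with hy | hy
            · exact hM.prop.2 hx hy hxy
            · rw [Set.mem_singleton_iff] at hy; subst hy
              exact hdisj x hx
            · rw [Set.mem_singleton_iff] at hx; subst hx
              rw [Set.inter_comm]; exact hdisj y hy
            · simp only [Set.mem_singleton_iff] at hx hy
              exact absurd (hx.trans hy.symm) hxy
        have := hM.2 hmem Set.subset_union_left
        exact hbM (this (Or.inr rfl))
      have hinj : Set.InjOn U M := by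
        intro a ha b hb hUab
        by_contra hab
        have h2 : U a ∩ U b = ∅ := hM.prop.2 ha hb hab
        rw [hUab, Set.inter_self] at h2
        exact (hne b (hMΛ hb)).ne_empty h2
      have hc := hccc (U '' M) (by
          rintro V ⟨a, ha, rfl⟩
          exact ⟨hop a (hMΛ ha), hne a (hMΛ ha)⟩)
        (by
          rintro V ⟨a, ha, rfl⟩ W ⟨b, hb, rfl⟩ hVW
          have hab : a ≠ b := fun e => hVW (by rw [e])
          exact Set.disjoint_iff_inter_eq_empty.mpr (hM.prop.2 ha hb hab))
      exact hMunc (Set.countable_of_injective_of_countable_image hinj hc)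

/-- In a ccc topological space there is no uncountable family of
non-empty open sets, indexed by a set `Λ ⊆ ℝ^m` any `n+1` distinct points of which
are linearly independent, all of whose `(n+1)`-fold intersections are empty. -/
theorem no_uncountable_family_with_empty_intersections
    {K : Type*} [TopologicalSpace K] (m n : ℕ)
    (hccc : ∀ 𝒰 : Set (Set K), (∀ U ∈ 𝒰, IsOpen U ∧ U.Nonempty) →
      (𝒰.Pairwise Disjoint) → 𝒰.Countable)
    (Λ : Set (Fin m → ℝ)) (hunc : ¬ Λ.Countable)
    (hli : ∀ f : Fin (n + 1) → (Fin m → ℝ), Function.Injective f →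
      (∀ i, f i ∈ Λ) → LinearIndependent ℝ f)
    (U : (Fin m → ℝ) → Set K)
    (hUopen : ∀ a ∈ Λ, IsOpen (U a)) (hUne : ∀ a ∈ Λ, (U a).Nonempty)
    (hint : ∀ f : Fin (n + 1) → (Fin m → ℝ), Function.Injective f →
      (∀ i, f i ∈ Λ) → (⋂ i, U (f i)) = ∅) :
    False :=
  ccc_aux hccc n Λ U hunc hUopen hUne hint
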